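/- The Black–Scholes call price function u(τ, x) = xΦ(d₁) − Ke^{−rτ}Φ(d₂), with d₁ = (log(x/K) + (r + σ²/2)τ)/(σ√τ) and d₂ = d₁ − σ√τ, satisfies the PDE u_τ = ½σ²x² u_{xx} + rx u_x − ru for all τ > 0 and x > 0, and satisfies u(τ, x) → max(x − K, 0) as τ → 0⁺. -/

import Mathlib

open Real Filter Set

/-- Standard normal cumulative distribution function. -/
noncomputable def Phi (x : ℝ) : ℝ :=
  ∫ t in Set.Iic x, (Real.sqrt (2 * Real.pi))⁻¹ * Real.exp (-t^2 / 2)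

noncomputable def d1 (K σ r τ x : ℝ) : ℝ :=
  (Real.log (x / K) + (r + σ^2 / 2) * τ) / (σ * Real.sqrt τ)

noncomputable def d2 (K σ r τ x : ℝ) : ℝ :=
  d1 K σ r τ x - σ * Real.sqrt τ

/-- The Black–Scholes call price as a function of time-to-maturity and spot. -/
noncomputable def bsCall (K σ r τ x : ℝ) : ℝ :=
  x * Phi (d1 K σ r τ x) - K * Real.exp (-r * τ) * Phi (d2 K σ r τ x)

open MeasureTheory

noncomputable def gauss (t : ℝ) : ℝ := (Real.sqrt (2 * Real.pi))⁻¹ * Real.exp (-t^2 / 2)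

lemma gauss_eq (t : ℝ) : gauss t = (Real.sqrt (2 * Real.pi))⁻¹ * Real.exp (-(1/2) * t^2) := by
  unfold gauss; ring_nf

lemma integrable_gauss : Integrable gauss := by
  have h := (integrable_exp_neg_mul_sq (by norm_num : (0:ℝ) < 1/2)).const_mul
      (Real.sqrt (2 * Real.pi))⁻¹
  exact h.congr (by filter_upwards with t using (gauss_eq t).symm)

lemma continuous_gauss : Continuous gauss := by
  unfold gauss; continuity

lemma integral_gauss : ∫ t, gauss t = 1 := by
  have h : ∫ t, gauss t = (Real.sqrt (2 * Real.pi))⁻¹ * ∫ t, Real.exp (-(1/2) * t^2) := by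
    rw [← integral_const_mul]; congr 1; ext t; exact gauss_eq t
  rw [h, integral_gaussian]
  have : Real.sqrt (π / (1/2)) = Real.sqrt (2 * π) := by norm_num [mul_comm]
  rw [this, inv_mul_cancel₀]
  positivity

lemma Phi_eq (x : ℝ) : Phi x = ∫ t in Set.Iic x, gauss t := rfl

lemma hasDerivAt_Phi (x : ℝ) : HasDerivAt Phi (gauss x) x := by
  have key : ∀ y, Phi y = (∫ t in (0:ℝ)..y, gauss t) + Phi 0 := by
    intro y
    have := intervalIntegral.integral_Iic_sub_Iic (μ := volume) (f := gauss) (a := 0) (b := y)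
      integrable_gauss.integrableOn integrable_gauss.integrableOn
    rw [Phi_eq, Phi_eq]
    linarith
  have h : HasDerivAt (fun y => (∫ t in (0:ℝ)..y, gauss t) + Phi 0) (gauss x) x := by
    have := intervalIntegral.integral_hasDerivAt_right
      (integrable_gauss.intervalIntegrable (a := 0) (b := x))
      (continuous_gauss.stronglyMeasurableAtFilter _ _)
      continuous_gauss.continuousAt
    exact this.add_const _
  exact h.congr_deriv rfl |>.congr_of_eventuallyEq (by filter_upwards with y using (key y))
    |>.congr_deriv rfl

lemma continuous_Phi : Continuous Phi := by
  have : Differentiable ℝ Phi := fun x => (hasDerivAt_Phi x).differentiableAt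
  exact this.continuous

lemma tendsto_Phi_atTop : Tendsto Phi atTop (nhds 1) := by
  have h := MeasureTheory.tendsto_setIntegral_of_monotone (μ := volume) (f := gauss)
    (s := fun x : ℝ => Set.Iic x) (fun i => measurableSet_Iic)
    (fun a b hab => Set.Iic_subset_Iic.2 hab) (by rw [Set.iUnion_Iic]; exact integrable_gauss.integrableOn)
  rw [Set.iUnion_Iic] at h
  rw [show Phi = fun i => ∫ x in Iic i, gauss x from funext Phi_eq]
  simpa [integral_gauss] using h

lemma tendsto_Phi_atBot : Tendsto Phi atBot (nhds 0) := by
  have h := MeasureTheory.tendsto_setIntegral_of_antitone (μ := volume) (f := gauss)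
    (s := fun x : ℝ => Set.Iic (-x)) (fun i => measurableSet_Iic)
    (fun a b hab => Set.Iic_subset_Iic.2 (by linarith)) ⟨0, integrable_gauss.integrableOn⟩
  have hI : ⋂ x : ℝ, Set.Iic (-x) = ∅ := by
    ext t; simp only [Set.mem_iInter, Set.mem_Iic, Set.mem_empty_iff_false, iff_false, not_forall]
    exact ⟨-(t-1), by push_neg; linarith⟩
  rw [hI] at h
  simp only [MeasureTheory.setIntegral_empty] at h
  have : Tendsto (fun x : ℝ => Phi (-x)) atTop (nhds 0) := by simpa [Phi_eq] using h
  have h2 := this.comp tendsto_neg_atBot_atTop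
  simpa [Function.comp_def] using h2

lemma gauss_even (t : ℝ) : gauss (-t) = gauss t := by unfold gauss; ring_nf

lemma Phi_zero : Phi 0 = 1/2 := by
  have hsplit : Phi 0 + ∫ t in Set.Ioi (0:ℝ), gauss t = 1 := by
    rw [Phi_eq, ← integral_gauss]
    rw [← MeasureTheory.setIntegral_union (by simp [Set.disjoint_left]) measurableSet_Ioi
      integrable_gauss.integrableOn integrable_gauss.integrableOn]
    rw [Set.Iic_union_Ioi, MeasureTheory.Measure.restrict_univ]
  have hsymm : ∫ t in Set.Ioi (0:ℝ), gauss t = Phi 0 := by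
    rw [Phi_eq]
    rw [show Set.Ioi (0:ℝ) = Set.Ioi (-(0:ℝ)) by norm_num, ← integral_comp_neg_Iic]
    simp [gauss_even]
  rw [hsymm] at hsplit; linarith

lemma bs_identity {K σ r τ x : ℝ} (hK : 0 < K) (hσ : 0 < σ) (hτ : 0 < τ) (hx : 0 < x) :
    x * gauss (d1 K σ r τ x) = K * Real.exp (-r * τ) * gauss (d2 K σ r τ x) := by
  have hspos : 0 < σ * Real.sqrt τ := mul_pos hσ (Real.sqrt_pos.2 hτ)
  set s := σ * Real.sqrt τ with hs_def
  set D := d1 K σ r τ x with hD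
  have h1 : D * s = Real.log (x/K) + (r + σ^2/2) * τ := by
    rw [hD]; unfold d1; rw [← hs_def]; exact div_mul_cancel₀ _ hspos.ne'
  have h2 : s^2 = σ^2 * τ := by
    rw [hs_def, mul_pow, Real.sq_sqrt hτ.le]
  have hexp : Real.exp (-(D - s)^2/2) = Real.exp (-D^2/2) * (x/K * Real.exp (r*τ)) := by
    have expand : -(D - s)^2/2 = -D^2/2 + (Real.log (x/K) + r * τ) := by
      have : -(D - s)^2/2 = -D^2/2 + D*s - s^2/2 := by ring
      rw [this, h1, h2]; ring
    rw [expand, Real.exp_add, Real.exp_add, Real.exp_log (div_pos hx hK)]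
  have hd2 : d2 K σ r τ x = D - s := rfl
  rw [hd2]
  unfold gauss
  rw [hexp, show -r * τ = -(r * τ) by ring, Real.exp_neg]
  field_simp

lemma hasDerivAt_d1_x {K σ r τ x : ℝ} (hK : 0 < K) (hτ : 0 < τ) (hx : 0 < x) :
    HasDerivAt (fun y => d1 K σ r τ y) (x⁻¹ / (σ * Real.sqrt τ)) x := by
  have hdiv : HasDerivAt (fun y : ℝ => y / K) (1 / K) x := (hasDerivAt_id x).div_const K
  have hlog : HasDerivAt (fun y : ℝ => Real.log (y / K)) ((x / K)⁻¹ * (1 / K)) x :=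
    by have := (Real.hasDerivAt_log (div_pos hx hK).ne').comp x hdiv; exact this
  have h : HasDerivAt (fun y : ℝ => (Real.log (y / K) + (r + σ^2 / 2) * τ) / (σ * Real.sqrt τ))
      (((x / K)⁻¹ * (1 / K)) / (σ * Real.sqrt τ)) x :=
    (hlog.add_const _).div_const _
  have heq : ((x / K)⁻¹ * (1 / K)) / (σ * Real.sqrt τ) = x⁻¹ / (σ * Real.sqrt τ) := by
    congr 1
    field_simp
  rw [heq] at h
  exact h

lemma hasDerivAt_bsCall_x {K σ r τ x : ℝ} (hK : 0 < K) (hσ : 0 < σ) (hτ : 0 < τ) (hx : 0 < x) :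
    HasDerivAt (fun y => bsCall K σ r τ y) (Phi (d1 K σ r τ x)) x := by
  set Dx := x⁻¹ / (σ * Real.sqrt τ) with hDx
  have hd1 : HasDerivAt (fun y => d1 K σ r τ y) Dx x := hasDerivAt_d1_x hK hτ hx
  have hd2 : HasDerivAt (fun y => d2 K σ r τ y) Dx x := by
    have := hd1.sub_const (σ * Real.sqrt τ)
    simpa [d2] using this
  have hP1 : HasDerivAt (fun y => Phi (d1 K σ r τ y)) (gauss (d1 K σ r τ x) * Dx) x :=
    (hasDerivAt_Phi _).comp x hd1
  have hP2 : HasDerivAt (fun y => Phi (d2 K σ r τ y)) (gauss (d2 K σ r τ x) * Dx) x :=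
    (hasDerivAt_Phi _).comp x hd2
  have ht1 : HasDerivAt (fun y => y * Phi (d1 K σ r τ y))
      (1 * Phi (d1 K σ r τ x) + x * (gauss (d1 K σ r τ x) * Dx)) x :=
    (hasDerivAt_id x).mul hP1
  have ht2 : HasDerivAt (fun y => K * Real.exp (-r * τ) * Phi (d2 K σ r τ y))
      (K * Real.exp (-r * τ) * (gauss (d2 K σ r τ x) * Dx)) x := hP2.const_mul _
  have h := ht1.sub ht2
  have hid := bs_identity (r := r) hK hσ hτ hx
  have : 1 * Phi (d1 K σ r τ x) + x * (gauss (d1 K σ r τ x) * Dx)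
      - K * Real.exp (-r * τ) * (gauss (d2 K σ r τ x) * Dx) = Phi (d1 K σ r τ x) := by
    linear_combination Dx * hid
  rw [this] at h
  exact h

lemma hasDerivAt_Phi_d1_x {K σ r τ x : ℝ} (hK : 0 < K) (hτ : 0 < τ) (hx : 0 < x) :
    HasDerivAt (fun y => Phi (d1 K σ r τ y)) (gauss (d1 K σ r τ x) * (x⁻¹ / (σ * Real.sqrt τ))) x :=
  (hasDerivAt_Phi _).comp x (hasDerivAt_d1_x hK hτ hx)

theorem stmt9 (K σ r : ℝ) (hK : 0 < K) (hσ : 0 < σ) (hr : 0 ≤ r) :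
    (∀ τ > (0:ℝ), ∀ x > (0:ℝ),
      deriv (fun t => bsCall K σ r t x) τ
        = (1/2) * σ^2 * x^2 * deriv (deriv (fun y => bsCall K σ r τ y)) x
          + r * x * deriv (fun y => bsCall K σ r τ y) x
          - r * bsCall K σ r τ x) ∧
    (∀ x > (0:ℝ),
      Tendsto (fun τ => bsCall K σ r τ x) (nhdsWithin 0 (Set.Ioi 0))
        (nhds (max (x - K) 0))) := by
  constructor
  · intro τ hτ x hx
    have hsτ : 0 < Real.sqrt τ := Real.sqrt_pos.2 hτ
    have hux : deriv (fun y => bsCall K σ r τ y) x = Phi (d1 K σ r τ x) :=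
      (hasDerivAt_bsCall_x hK hσ hτ hx).deriv
    have hev : deriv (fun y => bsCall K σ r τ y) =ᶠ[nhds x] fun y => Phi (d1 K σ r τ y) := by
      filter_upwards [Ioi_mem_nhds hx] with y hy
      exact (hasDerivAt_bsCall_x hK hσ hτ hy).deriv
    have huxx : deriv (deriv (fun y => bsCall K σ r τ y)) x
        = gauss (d1 K σ r τ x) * (x⁻¹ / (σ * Real.sqrt τ)) := by
      rw [hev.deriv_eq]
      exact (hasDerivAt_Phi_d1_x hK hτ hx).deriv
    -- τ-derivative
    set D1t := ((r + σ^2/2) * 1 * (σ * Real.sqrt τ)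
        - (Real.log (x/K) + (r + σ^2/2)*τ) * (σ * (1/(2*Real.sqrt τ)))) / (σ * Real.sqrt τ)^2
      with hD1t
    have hden : HasDerivAt (fun t : ℝ => σ * Real.sqrt t) (σ * (1/(2*Real.sqrt τ))) τ :=
      (Real.hasDerivAt_sqrt hτ.ne').const_mul σ
    have hd1t : HasDerivAt (fun t => d1 K σ r t x) D1t τ := by
      have hnum : HasDerivAt (fun t : ℝ => Real.log (x / K) + (r + σ^2/2) * t)
          ((r + σ^2/2) * 1) τ := ((hasDerivAt_id τ).const_mul (r + σ^2/2)).const_add _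
      exact hnum.div hden (by positivity)
    have hd2t : HasDerivAt (fun t => d2 K σ r t x) (D1t - σ * (1/(2*Real.sqrt τ))) τ :=
      hd1t.sub hden
    have hP1t : HasDerivAt (fun t => x * Phi (d1 K σ r t x))
        (x * (gauss (d1 K σ r τ x) * D1t)) τ :=
      ((hasDerivAt_Phi _).comp τ hd1t).const_mul x
    have hexp : HasDerivAt (fun t : ℝ => Real.exp (-r * t)) (Real.exp (-r * τ) * (-r * 1)) τ :=
      ((hasDerivAt_id τ).const_mul (-r)).exp
    have hterm2 : HasDerivAt (fun t => K * (Real.exp (-r * t) * Phi (d2 K σ r t x)))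
        (K * (Real.exp (-r * τ) * (-r * 1) * Phi (d2 K σ r τ x)
          + Real.exp (-r * τ) * (gauss (d2 K σ r τ x) * (D1t - σ * (1/(2*Real.sqrt τ)))))) τ :=
      (hexp.mul ((hasDerivAt_Phi _).comp τ hd2t)).const_mul K
    have huτ : HasDerivAt (fun t => bsCall K σ r t x)
        (x * (gauss (d1 K σ r τ x) * D1t)
          - K * (Real.exp (-r * τ) * (-r * 1) * Phi (d2 K σ r τ x)
            + Real.exp (-r * τ) * (gauss (d2 K σ r τ x) * (D1t - σ * (1/(2*Real.sqrt τ)))))) τ := by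
      have hfun : (fun t => bsCall K σ r t x)
          = fun t => x * Phi (d1 K σ r t x) - K * (Real.exp (-r * t) * Phi (d2 K σ r t x)) := by
        funext t; unfold bsCall; ring
      rw [hfun]
      exact hP1t.sub hterm2
    rw [huτ.deriv, hux, huxx]
    have hid := bs_identity (r := r) hK hσ hτ hx
    have hg2 : gauss (d2 K σ r τ x) = x * gauss (d1 K σ r τ x) * Real.exp (r * τ) / K := by
      rw [eq_div_iff hK.ne']
      rw [show -r * τ = -(r * τ) by ring, Real.exp_neg] at hid
      field_simp at hid
      linarith [hid]
    rw [hg2, show -r * τ = -(r * τ) by ring, Real.exp_neg]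
    unfold bsCall
    rw [show -r * τ = -(r * τ) by ring, Real.exp_neg]
    field_simp
    ring
  · intro x hx
    have hsqrt0 : Tendsto (fun τ : ℝ => Real.sqrt τ) (nhdsWithin 0 (Set.Ioi 0)) (nhds 0) := by
      have h : ContinuousAt Real.sqrt 0 := Real.continuous_sqrt.continuousAt
      simpa [Real.sqrt_zero] using h.tendsto.mono_left nhdsWithin_le_nhds
    have hσs0 : Tendsto (fun τ : ℝ => σ * Real.sqrt τ) (nhdsWithin 0 (Set.Ioi 0)) (nhds 0) := by
      simpa using hsqrt0.const_mul σ
    have hexp1 : Tendsto (fun τ : ℝ => Real.exp (-r * τ)) (nhdsWithin 0 (Set.Ioi 0)) (nhds 1) := by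
      have h : ContinuousAt (fun τ : ℝ => Real.exp (-r * τ)) 0 := by fun_prop
      simpa using h.tendsto.mono_left nhdsWithin_le_nhds
    set a := r + σ^2/2 with ha
    set L := Real.log (x / K) with hL
    have hnum : Tendsto (fun τ : ℝ => L + a * τ) (nhdsWithin 0 (Set.Ioi 0)) (nhds L) := by
      have h : ContinuousAt (fun τ : ℝ => L + a * τ) 0 := by fun_prop
      simpa using h.tendsto.mono_left nhdsWithin_le_nhds
    have hden_pos : Tendsto (fun τ : ℝ => σ * Real.sqrt τ) (nhdsWithin 0 (Set.Ioi 0))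
        (nhdsWithin 0 (Set.Ioi 0)) := by
      apply tendsto_nhdsWithin_of_tendsto_nhds_of_eventually_within _ hσs0
      filter_upwards [self_mem_nhdsWithin] with τ hτ
      exact mul_pos hσ (Real.sqrt_pos.2 hτ)
    have hinv : Tendsto (fun τ : ℝ => (σ * Real.sqrt τ)⁻¹) (nhdsWithin 0 (Set.Ioi 0)) atTop :=
      tendsto_inv_nhdsGT_zero.comp hden_pos
    have hd1_eq : ∀ τ : ℝ, d1 K σ r τ x = (L + a * τ) * (σ * Real.sqrt τ)⁻¹ := by
      intro τ; unfold d1; rw [div_eq_mul_inv]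
    rcases lt_trichotomy x K with hlt | heq | hgt
    · -- x < K
      have hLneg : L < 0 := Real.log_neg (div_pos hx hK) ((div_lt_one hK).2 hlt)
      have hd1 : Tendsto (fun τ : ℝ => d1 K σ r τ x) (nhdsWithin 0 (Set.Ioi 0)) atBot := by
        simp only [hd1_eq]
        have h := Filter.Tendsto.atTop_mul_neg hLneg hinv hnum
        simpa [mul_comm] using h
      have hd2 : Tendsto (fun τ : ℝ => d2 K σ r τ x) (nhdsWithin 0 (Set.Ioi 0)) atBot := by
        have h := Filter.Tendsto.atBot_add hd1 hσs0.neg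
        simp only [d2]
        simpa [sub_eq_add_neg] using h
      have hP1 := tendsto_Phi_atBot.comp hd1
      have hP2 := tendsto_Phi_atBot.comp hd2
      have h := (hP1.const_mul x).sub ((hexp1.const_mul K).mul hP2)
      rw [show max (x - K) 0 = 0 from max_eq_right (by linarith)]
      unfold bsCall
      simpa [Function.comp_def] using h
    · -- x = K
      have hL0 : L = 0 := by rw [hL, heq, div_self hK.ne', Real.log_one]
      have hd1 : Tendsto (fun τ : ℝ => d1 K σ r τ x) (nhdsWithin 0 (Set.Ioi 0)) (nhds 0) := by
        have hg : Tendsto (fun τ : ℝ => (a / σ) * Real.sqrt τ) (nhdsWithin 0 (Set.Ioi 0))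
            (nhds 0) := by simpa using hsqrt0.const_mul (a / σ)
        apply hg.congr'
        filter_upwards [self_mem_nhdsWithin] with τ hτ
        unfold d1
        rw [← hL, hL0, ← ha]
        rw [show τ = Real.sqrt τ * Real.sqrt τ from (Real.mul_self_sqrt (le_of_lt hτ)).symm]
        have hs : Real.sqrt τ ≠ 0 := (Real.sqrt_pos.2 hτ).ne'
        field_simp
        rw [Real.sqrt_sq (Real.sqrt_nonneg τ)]
        ring
      have hd2 : Tendsto (fun τ : ℝ => d2 K σ r τ x) (nhdsWithin 0 (Set.Ioi 0)) (nhds 0) := by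
        have h := hd1.sub hσs0
        simpa [d2] using h
      have hP1 := (continuous_Phi.continuousAt.tendsto).comp hd1
      have hP2 := (continuous_Phi.continuousAt.tendsto).comp hd2
      rw [Phi_zero] at hP1 hP2
      have h := (hP1.const_mul x).sub ((hexp1.const_mul K).mul hP2)
      rw [show max (x - K) 0 = 0 from max_eq_right (by linarith)]
      have h2 : Tendsto (fun τ => bsCall K σ r τ x) (nhdsWithin 0 (Set.Ioi 0))
          (nhds (x * (1/2) - K * 1 * (1/2))) := by
        unfold bsCall; simpa [Function.comp_def] using h
      rw [show x * (1/2:ℝ) - K * 1 * (1/2) = 0 by rw [heq]; ring] at h2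
      exact h2
    · -- x > K
      have hLpos : 0 < L := Real.log_pos ((one_lt_div hK).2 hgt)
      have hd1 : Tendsto (fun τ : ℝ => d1 K σ r τ x) (nhdsWithin 0 (Set.Ioi 0)) atTop := by
        simp only [hd1_eq]
        exact Filter.Tendsto.pos_mul_atTop hLpos hnum hinv
      have hd2 : Tendsto (fun τ : ℝ => d2 K σ r τ x) (nhdsWithin 0 (Set.Ioi 0)) atTop := by
        have h := Filter.Tendsto.atTop_add hd1 hσs0.neg
        simp only [d2]
        simpa [sub_eq_add_neg] using h
      have hP1 := tendsto_Phi_atTop.comp hd1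
      have hP2 := tendsto_Phi_atTop.comp hd2
      have h := (hP1.const_mul x).sub ((hexp1.const_mul K).mul hP2)
      rw [show max (x - K) 0 = x - K from max_eq_left (by linarith)]
      unfold bsCall
      simpa [Function.comp_def] using h
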